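/- Let M : ℝⁿ → ℝⁿ be an invertible linear map with operator norm ‖M⁻¹‖ ≤ δ for some δ < 1, and let A : ℝⁿ → ℝⁿ be continuous with C := sup_{x∈ℝⁿ} |A(x) − M(x)| < ∞. Then the maps ι_k := M^{−k} ∘ A^k converge uniformly on ℝⁿ to a continuous map ι : ℝⁿ → ℝⁿ which satisfies ι ∘ A = M ∘ ι and sup_{x∈ℝⁿ} |ι(x) − x| ≤ δC/(1 − δ). Moreover, if S ⊆ ℝⁿ satisfies A(S) ⊆ S and A(x) = M(x) for all x ∈ S, then ι(x) = x for all x ∈ S. -/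

import Mathlib

set_option maxHeartbeats 1000000


open Filter Topology

/-- The conjugacy construction of Proposition 1.5(ii): if `M` is an invertible
continuous linear map with `‖M⁻¹‖ ≤ δ < 1` and `A` is continuous with
`|A(x) − M(x)| ≤ C` for all `x`, then `ι_k = M^{−k} ∘ A^k` converges uniformly to a
continuous map `ι` satisfying `ι ∘ A = M ∘ ι` and `|ι(x) − x| ≤ δC/(1 − δ)`; moreover
`ι` is the identity on any `A`-invariant set on which `A` agrees with `M`. -/
theorem conjugacy_construction {n : ℕ} (δ C : ℝ) (hδ : δ < 1)
    (M Minv : EuclideanSpace ℝ (Fin n) →L[ℝ] EuclideanSpace ℝ (Fin n))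
    (hMinv_left : ∀ x, Minv (M x) = x) (hMinv_right : ∀ x, M (Minv x) = x)
    (hMinv_norm : ‖Minv‖ ≤ δ)
    (A : EuclideanSpace ℝ (Fin n) → EuclideanSpace ℝ (Fin n))
    (hA_cont : Continuous A)
    (hC : ∀ x, ‖A x - M x‖ ≤ C) :
    ∃ ι : EuclideanSpace ℝ (Fin n) → EuclideanSpace ℝ (Fin n),
      Continuous ι ∧
      TendstoUniformly (fun (k : ℕ) (x : EuclideanSpace ℝ (Fin n)) =>
        (⇑Minv)^[k] (A^[k] x)) ι atTop ∧
      (∀ x, ι (A x) = M (ι x)) ∧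
      (∀ x, ‖ι x - x‖ ≤ δ * C / (1 - δ)) ∧
      (∀ S : Set (EuclideanSpace ℝ (Fin n)), Set.MapsTo A S S →
        (∀ x ∈ S, A x = M x) → ∀ x ∈ S, ι x = x) := by
  set F : ℕ → EuclideanSpace ℝ (Fin n) → EuclideanSpace ℝ (Fin n) := fun k x => (⇑Minv)^[k] (A^[k] x) with hF
  have hδ0 : (0 : ℝ) ≤ δ := le_trans (norm_nonneg _) hMinv_norm
  have hC0 : (0 : ℝ) ≤ C := le_trans (norm_nonneg _) (hC 0)
  have hlip : ∀ w, ‖Minv w‖ ≤ δ * ‖w‖ := fun w =>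
    (Minv.le_opNorm w).trans (mul_le_mul_of_nonneg_right hMinv_norm (norm_nonneg w))
  have hiter : ∀ (k : ℕ) (u v : EuclideanSpace ℝ (Fin n)), ‖(⇑Minv)^[k] u - (⇑Minv)^[k] v‖ ≤ δ ^ k * ‖u - v‖ := by
    intro k
    induction k with
    | zero => intro u v; simp
    | succ k ih =>
      intro u v
      rw [Function.iterate_succ_apply, Function.iterate_succ_apply]
      calc ‖(⇑Minv)^[k] (Minv u) - (⇑Minv)^[k] (Minv v)‖
          ≤ δ ^ k * ‖Minv u - Minv v‖ := ih _ _
        _ = δ ^ k * ‖Minv (u - v)‖ := by rw [map_sub]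
        _ ≤ δ ^ k * (δ * ‖u - v‖) :=
            mul_le_mul_of_nonneg_left (hlip _) (pow_nonneg hδ0 k)
        _ = δ ^ (k + 1) * ‖u - v‖ := by ring
  have hstep : ∀ (k : ℕ) (x : EuclideanSpace ℝ (Fin n)), dist (F k x) (F (k + 1) x) ≤ δ * C * δ ^ k := by
    intro k x
    have h1 : F k x = (⇑Minv)^[k + 1] (M (A^[k] x)) := by
      rw [Function.iterate_succ_apply, hMinv_left]
    have h2 : F (k + 1) x = (⇑Minv)^[k + 1] (A (A^[k] x)) := by
      simp only [hF, Function.iterate_succ_apply' A]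
    rw [dist_eq_norm, h1, h2]
    calc ‖(⇑Minv)^[k+1] (M (A^[k] x)) - (⇑Minv)^[k+1] (A (A^[k] x))‖
        ≤ δ ^ (k + 1) * ‖M (A^[k] x) - A (A^[k] x)‖ := hiter _ _ _
      _ ≤ δ ^ (k + 1) * C := by
          refine mul_le_mul_of_nonneg_left ?_ (pow_nonneg hδ0 _)
          rw [norm_sub_rev]; exact hC _
      _ = δ * C * δ ^ k := by ring
  have hcau : ∀ x, CauchySeq fun k => F k x := fun x =>
    cauchySeq_of_le_geometric δ (δ * C) hδ (hstep · x)
  -- define the limit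
  have hlim : ∀ x, ∃ a, Tendsto (fun k => F k x) atTop (𝓝 a) := fun x =>
    cauchySeq_tendsto_of_complete (hcau x)
  choose ι hι using hlim
  have hdist : ∀ (x : EuclideanSpace ℝ (Fin n)) (k : ℕ), dist (F k x) (ι x) ≤ δ * C * δ ^ k / (1 - δ) :=
    fun x k => dist_le_of_le_geometric_of_tendsto δ (δ * C) hδ (hstep · x) (hι x) k
  have hTU : TendstoUniformly F ι atTop := by
    rw [Metric.tendstoUniformly_iff]
    intro ε hε
    have htend : Tendsto (fun k : ℕ => δ * C * δ ^ k / (1 - δ)) atTop (𝓝 0) := by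
      have : Tendsto (fun k : ℕ => δ ^ k) atTop (𝓝 0) :=
        tendsto_pow_atTop_nhds_zero_of_lt_one hδ0 hδ
      have := (this.const_mul (δ * C)).div_const (1 - δ)
      simpa using this
    filter_upwards [htend.eventually (gt_mem_nhds hε)] with k hk x
    calc dist (ι x) (F k x) = dist (F k x) (ι x) := dist_comm _ _
      _ ≤ δ * C * δ ^ k / (1 - δ) := hdist x k
      _ < ε := hk
  have hFcont : ∀ k, Continuous (F k) := fun k =>
    (Minv.continuous.iterate k).comp (hA_cont.iterate k)
  refine ⟨ι, hTU.continuous (Eventually.of_forall hFcont).frequently, hTU, ?_, ?_, ?_⟩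
  · -- conjugacy
    intro x
    have h1 : Tendsto (fun k => F k (A x)) atTop (𝓝 (ι (A x))) := hι (A x)
    have h2 : Tendsto (fun k => M (F (k + 1) x)) atTop (𝓝 (M (ι x))) :=
      (M.continuous.tendsto _).comp ((hι x).comp (tendsto_add_atTop_nat 1))
    have heq : (fun k => F k (A x)) = fun k => M (F (k + 1) x) := by
      funext k
      simp only [hF]
      rw [Function.iterate_succ_apply' (⇑Minv), hMinv_right, Function.iterate_succ_apply A]
    rw [heq] at h1
    exact tendsto_nhds_unique h1 h2
  · -- distance bound
    intro x
    have h0 : F 0 x = x := rfl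
    have := dist_le_of_le_geometric_of_tendsto₀ δ (δ * C) hδ (hstep · x) (hι x)
    rw [h0] at this
    rw [norm_sub_rev, ← dist_eq_norm]
    exact dist_comm x (ι x) ▸ this
  · -- fixed set
    intro S hmaps hagree x hx
    have hmem : ∀ k, A^[k] x ∈ S := by
      intro k
      induction k with
      | zero => exact hx
      | succ k ih => rw [Function.iterate_succ_apply' A]; exact hmaps ih
    have hfix : ∀ k, F k x = x := by
      intro k
      induction k with
      | zero => rfl
      | succ k ih =>
        have : A^[k + 1] x = M (A^[k] x) := by
          rw [Function.iterate_succ_apply' A, hagree _ (hmem k)]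
        simp only [hF] at ih ⊢
        rw [this, Function.iterate_succ_apply, hMinv_left, ih]
    have := hι x
    simp only [hfix] at this
    exact tendsto_nhds_unique this tendsto_const_nhds
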